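/- Block Vandermonde criterion: let B_1,…,B_r be l×l matrices over a field F such that B_iB_j = B_jB_i for all i,j ∈ {1,…,r}. Then the rl × rl block matrix M_r whose (t,j) block (t = 0,…,r−1, j = 1,…,r) equals B_j^t is invertible if and only if B_i − B_j is invertible for all i ≠ j. -/

import Mathlib

open Matrix

/-- In a finite-dimensional algebra over a field, an element of a subalgebra that is
a unit in the ambient algebra is a unit in the subalgebra. -/
lemma aux_isUnit_subalgebra {F A : Type*} [Field F] [Ring A] [Algebra F A]
    [FiniteDimensional F A] (S : Subalgebra F A) (x : S) (hx : IsUnit (x : A)) :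
    IsUnit x := by
  have hinjL : Function.Injective (LinearMap.mulLeft F x) := by
    intro a b hab
    have : (x : A) * (a : A) = (x : A) * (b : A) := congrArg Subtype.val hab
    exact Subtype.ext (hx.mul_left_cancel this)
  have hinjR : Function.Injective (LinearMap.mulRight F x) := by
    intro a b hab
    have : (a : A) * (x : A) = (b : A) * (x : A) := congrArg Subtype.val hab
    exact Subtype.ext (hx.mul_right_cancel this)
  obtain ⟨y, hy⟩ := (LinearMap.injective_iff_surjective.mp hinjL) 1
  obtain ⟨z, hz⟩ := (LinearMap.injective_iff_surjective.mp hinjR) 1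
  have hy' : x * y = 1 := hy
  have hz' : z * x = 1 := hz
  have hzy : z = y := by
    calc z = z * (x * y) := by rw [hy', mul_one]
      _ = (z * x) * y := by rw [mul_assoc]
      _ = y := by rw [hz', one_mul]
  exact ⟨⟨x, y, hy', hzy ▸ hz'⟩, rfl⟩

/-- Block Vandermonde criterion: for pairwise commuting `l×l` matrices
`B_1,…,B_r`, the `rl × rl` block Vandermonde matrix with `(t,j)` block `B_j^t`
is invertible iff `B_i - B_j` is invertible for all `i ≠ j`. -/
theorem block_vandermonde_invertible_iff
    (F : Type*) [Field F] (l r : ℕ) (hl : 0 < l) (hr : 0 < r)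
    (B : Fin r → Matrix (Fin l) (Fin l) F)
    (hcomm : ∀ i j, B i * B j = B j * B i) :
    IsUnit (Matrix.of fun p q : Fin r × Fin l => (B q.1 ^ (p.1 : ℕ)) p.2 q.2) ↔
      ∀ i j : Fin r, i ≠ j → IsUnit (B i - B j) := by
  classical
  constructor
  · -- if the block Vandermonde matrix is a unit then all differences are units
    intro hM i j hij
    by_contra hBij
    have hdet : (B i - B j).det = 0 := by
      by_contra h
      exact hBij ((Matrix.isUnit_iff_isUnit_det _).2 (isUnit_iff_ne_zero.2 h))
    obtain ⟨u, hu0, hu⟩ := Matrix.exists_mulVec_eq_zero_iff.2 hdet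
    have hBu : B i *ᵥ u = B j *ᵥ u := by
      have := hu
      rw [Matrix.sub_mulVec, sub_eq_zero] at this
      exact this
    have hpow : ∀ t : ℕ, (B i ^ t) *ᵥ u = (B j ^ t) *ᵥ u := by
      intro t
      induction t with
      | zero => simp
      | succ t ih =>
        have hc : B i ^ t * B j = B j * B i ^ t :=
          (Commute.pow_left (hcomm i j) t : _)
        calc (B i ^ (t + 1)) *ᵥ u = (B i ^ t * B i) *ᵥ u := by rw [pow_succ]
          _ = B i ^ t *ᵥ (B i *ᵥ u) := by rw [Matrix.mulVec_mulVec]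
          _ = B i ^ t *ᵥ (B j *ᵥ u) := by rw [hBu]
          _ = (B i ^ t * B j) *ᵥ u := by rw [Matrix.mulVec_mulVec]
          _ = (B j * B i ^ t) *ᵥ u := by rw [hc]
          _ = B j *ᵥ (B i ^ t *ᵥ u) := by rw [Matrix.mulVec_mulVec]
          _ = B j *ᵥ (B j ^ t *ᵥ u) := by rw [ih]
          _ = (B j * B j ^ t) *ᵥ u := by rw [Matrix.mulVec_mulVec]
          _ = (B j ^ (t + 1)) *ᵥ u := by rw [pow_succ']
    set v : Fin r × Fin l → F :=
      fun p => if p.1 = i then u p.2 else if p.1 = j then -u p.2 else 0 with hv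
    have hv0 : v ≠ 0 := by
      intro h
      apply hu0
      funext x
      have := congrFun h (i, x)
      simpa [hv] using this
    have hMv : (Matrix.of fun p q : Fin r × Fin l =>
        (B q.1 ^ (p.1 : ℕ)) p.2 q.2) *ᵥ v = 0 := by
      funext p
      obtain ⟨t, y⟩ := p
      show (∑ q : Fin r × Fin l, (B q.1 ^ (t : ℕ)) y q.2 * v q) = 0
      rw [Fintype.sum_prod_type]
      have hterm : ∀ k : Fin r, (∑ x : Fin l, (B k ^ (t : ℕ)) y x * v (k, x)) =
          if k = i then ((B i ^ (t : ℕ)) *ᵥ u) y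
          else if k = j then -(((B j ^ (t : ℕ)) *ᵥ u) y) else 0 := by
        intro k
        by_cases hki : k = i
        · subst hki
          simp [hv, Matrix.mulVec, dotProduct]
        · by_cases hkj : k = j
          · subst hkj
            simp [hv, hki, Matrix.mulVec, dotProduct, Finset.sum_neg_distrib]
          · simp [hv, hki, hkj]
      rw [Finset.sum_congr rfl fun k _ => hterm k]
      rw [Finset.sum_eq_add_of_mem i j (Finset.mem_univ _) (Finset.mem_univ _) hij
        (fun k _ hk => by simp [hk.1, hk.2])]
      simp [hij, Ne.symm hij, hpow (t : ℕ)]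
    exact hv0 (Matrix.mulVec_injective_iff_isUnit.mpr hM (by simpa using hMv))
  · -- if all differences are units then the block Vandermonde matrix is a unit
    intro h
    set S : Subalgebra F (Matrix (Fin l) (Fin l) F) := Algebra.adjoin F (Set.range B) with hS
    letI : CommRing S := Algebra.adjoinCommRingOfComm F
      (by rintro a ⟨i, rfl⟩ b ⟨j, rfl⟩; exact hcomm i j)
    let v : Fin r → S := fun k => ⟨B k, Algebra.subset_adjoin ⟨k, rfl⟩⟩
    have hV : IsUnit ((Matrix.vandermonde v)ᵀ) := by
      rw [Matrix.isUnit_iff_isUnit_det, Matrix.det_transpose, Matrix.det_vandermonde]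
      refine Finset.prod_induction _ IsUnit (fun a b => IsUnit.mul) isUnit_one fun i _ => ?_
      refine Finset.prod_induction _ IsUnit (fun a b => IsUnit.mul) isUnit_one fun j hj => ?_
      have hij : j ≠ i := (Finset.mem_Ioi.mp hj).ne'
      refine aux_isUnit_subalgebra S (v j - v i) ?_
      have : ((v j - v i : S) : Matrix (Fin l) (Fin l) F) = B j - B i := rfl
      rw [this]
      exact h j i hij
    have hmap := hV.map ((Matrix.compRingEquiv (Fin r) (Fin l) F).toRingHom.comp
      (S.val.toRingHom.mapMatrix))
    convert hmap using 2
    ext p q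
    simp [v, Matrix.vandermonde, Matrix.compRingEquiv]
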